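/- Let d ≥ 1 and let G be a SIC POVM on ℂ^d. Set t = (1/d)·(1 − 1/√(d+1)). Then for all k ≠ ℓ in Fin (d²) one has Tr[(d•G(k) − t•I)·(d•G(ℓ) − t•I)] = 0, and the d² matrices d•G(k) − t•I form a basis of the complex vector space of d×d complex matrices. -/

import Mathlib

open Matrix
open scoped ComplexOrder

/-- A SIC POVM on `ℂ^d`: a family of `d²` positive semidefinite matrices summing to the
identity, with `Tr(G i · G j) = 1/(d²(d+1))` for `i ≠ j` and `Tr((G i)²) = 1/d²`. -/
def IsSICPOVM (d : ℕ) (G : Fin (d ^ 2) → Matrix (Fin d) (Fin d) ℂ) : Prop :=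
  (∀ i, (G i).PosSemidef) ∧ (∑ i, G i = 1) ∧
    (∀ i j, i ≠ j → (G i * G j).trace = 1 / ((d : ℂ) ^ 2 * ((d : ℂ) + 1))) ∧
    (∀ i, (G i * G i).trace = 1 / (d : ℂ) ^ 2)

theorem stmt0 (d : ℕ) (hd : 1 ≤ d) (G : Fin (d ^ 2) → Matrix (Fin d) (Fin d) ℂ)
    (hG : IsSICPOVM d G) :
    (∀ k l : Fin (d ^ 2), k ≠ l →
      ((d • G k - ((1 / (d : ℝ)) * (1 - 1 / Real.sqrt (d + 1))) • (1 : Matrix (Fin d) (Fin d) ℂ)) *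
        (d • G l - ((1 / (d : ℝ)) * (1 - 1 / Real.sqrt (d + 1))) •
          (1 : Matrix (Fin d) (Fin d) ℂ))).trace = 0) ∧
    LinearIndependent ℂ (fun k : Fin (d ^ 2) =>
      d • G k - ((1 / (d : ℝ)) * (1 - 1 / Real.sqrt (d + 1))) •
        (1 : Matrix (Fin d) (Fin d) ℂ)) ∧
    Submodule.span ℂ (Set.range (fun k : Fin (d ^ 2) =>
      d • G k - ((1 / (d : ℝ)) * (1 - 1 / Real.sqrt (d + 1))) •
        (1 : Matrix (Fin d) (Fin d) ℂ))) = ⊤ := by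
  obtain ⟨hpos, hsum, hoff, hdiag⟩ := hG
  have hdne : d ≠ 0 := by omega
  have hd0 : (d : ℂ) ≠ 0 := Nat.cast_ne_zero.mpr hdne
  have hd1 : (d : ℂ) + 1 ≠ 0 := by
    have : ((d + 1 : ℕ) : ℂ) ≠ 0 := Nat.cast_ne_zero.mpr (Nat.succ_ne_zero d)
    push_cast at this; exact this
  have hsqpos : (0:ℝ) < Real.sqrt ((d:ℝ) + 1) := Real.sqrt_pos.mpr (by positivity)
  set s : ℂ := (Real.sqrt ((d:ℝ) + 1) : ℂ) with hs_def
  have hs0 : s ≠ 0 := by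
    simp only [hs_def, ne_eq, Complex.ofReal_eq_zero]
    exact ne_of_gt hsqpos
  have hs2 : s ^ 2 = (d : ℂ) + 1 := by
    rw [hs_def, ← Complex.ofReal_pow, Real.sq_sqrt (by positivity)]
    push_cast; ring
  -- trace of each G i
  have htr : ∀ i, (G i).trace = 1 / (d : ℂ) := by
    intro i
    have h1 : (G i * ∑ j, G j).trace = (G i).trace := by rw [hsum, mul_one]
    rw [Finset.mul_sum, trace_sum,
      ← Finset.add_sum_erase _ _ (Finset.mem_univ i), hdiag i,
      Finset.sum_congr rfl
        (fun j hj => hoff i j (Ne.symm (Finset.ne_of_mem_erase hj))),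
      Finset.sum_const, Finset.card_erase_of_mem (Finset.mem_univ i),
      Finset.card_univ, Fintype.card_fin] at h1
    rw [← h1, nsmul_eq_mul]
    have hcast : ((d ^ 2 - 1 : ℕ) : ℂ) = (d : ℂ) ^ 2 - 1 := by
      have : 1 ≤ d ^ 2 := Nat.one_le_iff_ne_zero.mpr (pow_ne_zero 2 hdne)
      push_cast [Nat.cast_sub this]
      ring
    rw [hcast]
    field_simp
    ring
  set τ : ℝ := (1 / (d : ℝ)) * (1 - 1 / Real.sqrt ((d:ℝ) + 1)) with hτ_def
  set c : ℂ := (τ : ℂ) with hc_def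
  have hτc : c = (1 / (d : ℂ)) * (1 - 1 / s) := by
    rw [hc_def, hτ_def, hs_def]; push_cast; ring
  set A : Fin (d ^ 2) → Matrix (Fin d) (Fin d) ℂ :=
    fun k => d • G k - τ • (1 : Matrix (Fin d) (Fin d) ℂ) with hA_def
  have hd1' : (1 : ℂ) + (d : ℂ) ≠ 0 := by rwa [add_comm]
  have hc1 : c • (1 : Matrix (Fin d) (Fin d) ℂ) = τ • (1 : Matrix (Fin d) (Fin d) ℂ) := by
    rw [hc_def, ← Complex.coe_algebraMap]
    exact algebraMap_smul ℂ τ (1 : Matrix (Fin d) (Fin d) ℂ)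
  have hsmul : ∀ k, A k = (d : ℂ) • G k - c • (1 : Matrix (Fin d) (Fin d) ℂ) := by
    intro k
    show d • G k - τ • (1 : Matrix (Fin d) (Fin d) ℂ) = _
    rw [hc1, Nat.cast_smul_eq_nsmul]
  have key : ∀ k l, (A k * A l).trace =
      (d : ℂ) ^ 2 * (G k * G l).trace - (d : ℂ) * c * (G k).trace
        - (d : ℂ) * c * (G l).trace + c ^ 2 * (d : ℂ) := by
    intro k l
    rw [hsmul k, hsmul l]
    simp only [Matrix.sub_mul, Matrix.mul_sub, Matrix.smul_mul, Matrix.mul_smul,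
      trace_sub, trace_smul, smul_smul, mul_one, one_mul, trace_one,
      Fintype.card_fin, smul_eq_mul]
    ring
  have h0 : c ^ 2 * (d : ℂ) * ((d : ℂ) + 1) - 2 * c * ((d : ℂ) + 1) + 1 = 0 := by
    rw [hτc]
    field_simp
    linear_combination (-1 : ℂ) * hs2
  have h0div : c ^ 2 * (d : ℂ) - 2 * c + 1 / ((d : ℂ) + 1) = 0 := by
    field_simp
    linear_combination h0
  have hx : ((d : ℂ) + 1) * (1 / ((d : ℂ) + 1)) = 1 := by field_simp
  have e1 : (d:ℂ)^2 * (1/((d:ℂ)^2*((d:ℂ)+1))) = 1/((d:ℂ)+1) := by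
    field_simp
  have e2 : (d:ℂ)*c*(1/(d:ℂ)) = c := by
    field_simp
  have e3 : (d:ℂ)^2 * (1/(d:ℂ)^2) = 1 := by field_simp
  -- off-diagonal traces
  have hAoff : ∀ k l : Fin (d ^ 2), k ≠ l → (A k * A l).trace = 0 := by
    intro k l hkl
    rw [key k l, hoff k l hkl, htr k, htr l, e1, e2]
    linear_combination h0div
  -- diagonal traces
  have hAdiag : ∀ k : Fin (d ^ 2), (A k * A k).trace = (d : ℂ) / ((d : ℂ) + 1) := by
    intro k
    rw [key k k, hdiag k, htr k, e3, e2]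
    linear_combination h0div - hx
  have hdd1 : (d : ℂ) / ((d : ℂ) + 1) ≠ 0 := div_ne_zero hd0 hd1
  have hli : LinearIndependent ℂ A := by
    rw [Fintype.linearIndependent_iff]
    intro g hg l
    have h2 : ((∑ k, g k • A k) * A l).trace = 0 := by rw [hg, Matrix.zero_mul, trace_zero]
    rw [Finset.sum_mul, trace_sum] at h2
    simp only [Matrix.smul_mul, trace_smul, smul_eq_mul] at h2
    have h3 : ∑ k, g k * (A k * A l).trace = g l * ((d : ℂ) / ((d : ℂ) + 1)) := by
      rw [Finset.sum_eq_single l]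
      · rw [hAdiag l]
      · intro k _ hk
        rw [hAoff k l hk, mul_zero]
      · intro h; exact absurd (Finset.mem_univ l) h
    rw [h3] at h2
    exact (mul_eq_zero.mp h2).resolve_right hdd1
  refine ⟨hAoff, hli, ?_⟩
  have : Nonempty (Fin (d ^ 2)) := ⟨⟨0, by positivity⟩⟩
  apply hli.span_eq_top_of_card_eq_finrank
  rw [Fintype.card_fin, Module.finrank_matrix, Fintype.card_fin, Module.finrank_self, mul_one, sq]
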